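/- Let n ≥ 1. The family of Boolean functions (h_a)_{a ∈ 𝔽₂ⁿ, aₙ = 0}, where h_a = x^a ⊕ M_a, is a basis of the 𝔽₂-vector space C_n of coincident functions with n variables: the 2^{n−1} functions h_a (for a with last coordinate 0) are linearly independent over 𝔽₂, and every coincident function is the sum of the h_a over some subset of {a ∈ 𝔽₂ⁿ : aₙ = 0}. -/
import Mathlib


/-- Möbius transform of a Boolean function with n variables:
`μₙ(f)(u) = ⊕_{v ≼ u} f(v)` where `≼` is componentwise. -/
def mobius {n : ℕ} (f : (Fin n → ZMod 2) → ZMod 2) : (Fin n → ZMod 2) → ZMod 2 :=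
  fun u => ∑ v ∈ Finset.univ.filter (fun v : Fin n → ZMod 2 => ∀ i, (v i).val ≤ (u i).val), f v
/-- The monomial `x^u`. -/
def monomial {n : ℕ} (u : Fin n → ZMod 2) : (Fin n → ZMod 2) → ZMod 2 :=
  fun a => ∏ i ∈ Finset.univ.filter (fun i => u i = 1), a i

/-- The minterm `M_u`. -/
def minterm {n : ℕ} (u : Fin n → ZMod 2) : (Fin n → ZMod 2) → ZMod 2 :=
  fun a => if a = u then 1 else 0

namespace Stmt17Aux

open Finset

lemma z2_le_one : ∀ x : ZMod 2, x.val ≤ 1 := by decide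

lemma z2_antisymm : ∀ x y : ZMod 2, x.val ≤ y.val → y.val ≤ x.val → x = y := by decide

lemma z2_le_of_one : ∀ x y : ZMod 2, x.val ≤ y.val → x = 1 → y = 1 := by decide

lemma z2_not_le : ∀ x y : ZMod 2, ¬ x.val ≤ y.val → x = 1 ∧ y = 0 := by decide

lemma z2_add_add : ∀ x : ZMod 2, x + 1 + 1 = x := by decide

lemma z2_ne_add_one : ∀ x : ZMod 2, x + 1 ≠ x := by decide

lemma z2_add_self : ∀ x : ZMod 2, x + x = 0 := by decide

lemma z2_cases : ∀ x : ZMod 2, x = 0 ∨ x = 1 := by decide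

lemma z2_val_inj : ∀ x y : ZMod 2, x.val = y.val → x = y := by decide

lemma z2_square : ∀ u v : ZMod 2, u + v + (v + u) = 0 := by decide

variable {n : ℕ}

lemma monomial_eq (u a : Fin n → ZMod 2) :
    monomial u a = if (∀ i, (u i).val ≤ (a i).val) then 1 else 0 := by
  by_cases h : ∀ i, (u i).val ≤ (a i).val
  · rw [if_pos h]
    apply Finset.prod_eq_one
    intro i hi
    rw [Finset.mem_filter] at hi
    exact z2_le_of_one (u i) (a i) (h i) hi.2
  · rw [if_neg h]
    push_neg at h
    obtain ⟨i, hi⟩ := h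
    obtain ⟨h1, h0⟩ := z2_not_le (u i) (a i) (by omega)
    exact Finset.prod_eq_zero (Finset.mem_filter.2 ⟨Finset.mem_univ i, h1⟩) h0

lemma mobius_minterm (u : Fin n → ZMod 2) : mobius (minterm u) = monomial u := by
  funext a
  show (∑ v ∈ Finset.univ.filter (fun v : Fin n → ZMod 2 => ∀ i, (v i).val ≤ (a i).val),
      if v = u then (1 : ZMod 2) else 0) = monomial u a
  rw [Finset.sum_ite_eq' _ u (fun _ => (1 : ZMod 2)), monomial_eq]
  simp [Finset.mem_filter]

lemma mobius_monomial (u : Fin n → ZMod 2) : mobius (monomial u) = minterm u := by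
  funext a
  show (∑ v ∈ Finset.univ.filter (fun v : Fin n → ZMod 2 => ∀ i, (v i).val ≤ (a i).val),
      monomial u v) = minterm u a
  simp only [monomial_eq]
  rw [← Finset.sum_filter, Finset.filter_filter]
  by_cases hau : a = u
  · subst hau
    have hsingle : Finset.univ.filter
        (fun v : Fin n → ZMod 2 =>
          (∀ i, (v i).val ≤ (a i).val) ∧ ∀ i, (a i).val ≤ (v i).val) = {a} := by
      ext v
      simp only [Finset.mem_filter, Finset.mem_univ, true_and, Finset.mem_singleton]
      constructor
      · rintro ⟨h1, h2⟩
        funext i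
        exact z2_antisymm _ _ (h1 i) (h2 i)
      · rintro rfl
        exact ⟨fun i => le_refl _, fun i => le_refl _⟩
    rw [hsingle]
    simp [minterm]
  · by_cases hua : ∀ i, (u i).val ≤ (a i).val
    · have hex : ∃ i, u i = 0 ∧ a i = 1 := by
        have : ∃ i, a i ≠ u i := by
          by_contra hc
          push_neg at hc
          exact hau (funext hc)
        obtain ⟨i, hi⟩ := this
        rcases z2_cases (u i) with h0 | h1
        · rcases z2_cases (a i) with ha0 | ha1
          · exact absurd (ha0.trans h0.symm) hi
          · exact ⟨i, h0, ha1⟩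
        · have := z2_le_of_one (u i) (a i) (hua i) h1
          exact absurd (this.trans h1.symm) hi
      obtain ⟨i₀, hu0, ha1⟩ := hex
      have hsum : (∑ v ∈ Finset.univ.filter
          (fun v : Fin n → ZMod 2 =>
            (∀ i, (v i).val ≤ (a i).val) ∧ ∀ i, (u i).val ≤ (v i).val), (1 : ZMod 2)) = 0 := by
        apply Finset.sum_involution (fun v _ => Function.update v i₀ (v i₀ + 1))
        · intro v hv
          decide
        · intro v hv h
          intro hcontra
          have := congrFun hcontra i₀
          rw [Function.update_self] at this
          exact z2_ne_add_one (v i₀) this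
        · intro v hv
          funext i
          by_cases hij : i = i₀
          · subst hij
            simp [Function.update_self, z2_add_add]
          · simp [Function.update_of_ne hij]
        · intro v hv
          rw [Finset.mem_filter] at hv ⊢
          obtain ⟨_, h1, h2⟩ := hv
          refine ⟨Finset.mem_univ _, fun i => ?_, fun i => ?_⟩
          · by_cases hij : i = i₀
            · subst hij
              rw [ha1]
              exact z2_le_one _
            · rw [Function.update_of_ne hij]
              exact h1 i
          · by_cases hij : i = i₀
            · subst hij
              rw [hu0]
              simp
            · rw [Function.update_of_ne hij]
              exact h2 i
      rw [hsum]
      simp [minterm, hau]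
    · have hempty : Finset.univ.filter
          (fun v : Fin n → ZMod 2 =>
            (∀ i, (v i).val ≤ (a i).val) ∧ ∀ i, (u i).val ≤ (v i).val) = ∅ := by
        ext v
        simp only [Finset.mem_filter, Finset.mem_univ, true_and, Finset.notMem_empty,
          iff_false, not_and]
        intro h1 h2
        exact hua fun i => le_trans (h2 i) (h1 i)
      rw [hempty]
      simp [minterm, hau]

/-- Möbius transform as a linear map. -/
def muL (n : ℕ) : ((Fin n → ZMod 2) → ZMod 2) →ₗ[ZMod 2] ((Fin n → ZMod 2) → ZMod 2) where
  toFun := mobius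
  map_add' f g := by
    funext u
    simp [mobius, Finset.sum_add_distrib]
  map_smul' c f := by
    funext u
    simp [mobius, Finset.mul_sum, smul_eq_mul]

lemma muL_apply (f : (Fin n → ZMod 2) → ZMod 2) : muL n f = mobius f := rfl

lemma eq_sum_minterm (f : (Fin n → ZMod 2) → ZMod 2) :
    f = ∑ u : Fin n → ZMod 2, f u • minterm u := by
  funext a
  rw [Finset.sum_apply]
  simp [minterm, smul_eq_mul, Finset.sum_ite_eq]

lemma mobius_mobius (f : (Fin n → ZMod 2) → ZMod 2) : mobius (mobius f) = f := by
  have h : mobius (mobius f) = muL n (muL n f) := rfl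
  rw [h]
  conv_lhs => rw [eq_sum_minterm f]
  rw [map_sum, map_sum]
  simp only [map_smul, muL_apply, mobius_minterm, mobius_monomial]
  exact (eq_sum_minterm f).symm

end Stmt17Aux

open Stmt17Aux Finset

theorem stmt17 (n : ℕ) (hn : 1 ≤ n) :
    Fintype.card {a : Fin n → ZMod 2 // a ⟨n - 1, by omega⟩ = 0} = 2 ^ (n - 1) ∧
    LinearIndependent (ZMod 2)
      (fun a : {a : Fin n → ZMod 2 // a ⟨n - 1, by omega⟩ = 0} =>
        (fun x => monomial a.1 x + minterm a.1 x)) ∧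
    (∀ f : (Fin n → ZMod 2) → ZMod 2, mobius f = f →
      ∃ S : Finset {a : Fin n → ZMod 2 // a ⟨n - 1, by omega⟩ = 0},
        f = ∑ a ∈ S, (fun x => monomial a.1 x + minterm a.1 x)) := by
  classical
  set j : Fin n := ⟨n - 1, by omega⟩ with hj
  set ι := {a : Fin n → ZMod 2 // a j = 0} with hι
  set hfam : ι → ((Fin n → ZMod 2) → ZMod 2) :=
    fun a => (fun x => monomial a.1 x + minterm a.1 x) with hhfam
  -- cardinality
  have hcard : Fintype.card ι = 2 ^ (n - 1) := by
    have e : ι ≃ ({i : Fin n // i ≠ j} → ZMod 2) :=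
      { toFun := fun a i => a.1 i.1
        invFun := fun g => ⟨fun i => if h : i = j then 0 else g ⟨i, h⟩, by simp⟩
        left_inv := fun a => by
          apply Subtype.ext
          funext i
          dsimp only
          split_ifs with h
          · rw [h]; exact a.2.symm
          · rfl
        right_inv := fun g => by
          funext i
          dsimp only
          rw [dif_neg i.2] }
    rw [Fintype.card_congr e, Fintype.card_fun, ZMod.card]
    congr 1
    rw [Fintype.card_subtype_compl, Fintype.card_subtype_eq, Fintype.card_fin]
  -- key evaluation lemma
  have eval_lemma : ∀ g : ι → ZMod 2, (∑ i : ι, g i • hfam i) = 0 → ∀ a : ι,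
      (∑ b ∈ Finset.univ.filter (fun b : ι => ∀ i, (b.1 i).val ≤ (a.1 i).val), g b) = 0 := by
    intro g hg a
    set a' : Fin n → ZMod 2 := Function.update a.1 j 1 with ha'
    have h2 : ∀ b : ι, (g b • hfam b) a'
        = if (∀ i, (b.1 i).val ≤ (a.1 i).val) then g b else 0 := by
      intro b
      have hmt : minterm b.1 a' = 0 := by
        unfold minterm
        rw [if_neg]
        intro h
        have h1 := congrFun h j
        rw [ha', Function.update_self, b.2] at h1
        exact one_ne_zero h1
      have hle : (∀ i, (b.1 i).val ≤ (a' i).val) ↔ (∀ i, (b.1 i).val ≤ (a.1 i).val) := by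
        constructor <;> intro h i <;> by_cases hij : i = j
        · subst hij
          rw [b.2]
          simp
        · have := h i
          rwa [ha', Function.update_of_ne hij] at this
        · subst hij
          rw [b.2]
          simp
        · rw [ha', Function.update_of_ne hij]
          exact h i
      have : hfam b a' = monomial b.1 a' + minterm b.1 a' := rfl
      rw [Pi.smul_apply, this, hmt, add_zero, monomial_eq, smul_eq_mul]
      simp only [hle]
      split_ifs <;> simp
    have h3 := congrFun hg a'
    rw [Finset.sum_apply] at h3
    rw [Finset.sum_congr rfl (fun b _ => h2 b)] at h3
    rw [Finset.sum_filter]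
    simpa using h3
  -- linear independence
  have hind : LinearIndependent (ZMod 2) hfam := by
    rw [Fintype.linearIndependent_iff]
    intro g hg
    set wt : ι → ℕ := fun a => ∑ i, (a.1 i).val with hwt
    have key : ∀ m, ∀ a : ι, wt a < m → g a = 0 := by
      intro m
      induction m with
      | zero => intro a ha; omega
      | succ m ih =>
        intro a ha
        have h0 := eval_lemma g hg a
        have hamem : a ∈ Finset.univ.filter (fun b : ι => ∀ i, (b.1 i).val ≤ (a.1 i).val) := by
          simp
        rw [← Finset.add_sum_erase _ _ hamem] at h0
        have hrest : (∑ b ∈ (Finset.univ.filter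
            (fun b : ι => ∀ i, (b.1 i).val ≤ (a.1 i).val)).erase a, g b) = 0 := by
          apply Finset.sum_eq_zero
          intro b hb
          rw [Finset.mem_erase, Finset.mem_filter] at hb
          obtain ⟨hba, _, hble⟩ := hb
          apply ih
          have hne : b.1 ≠ a.1 := fun h => hba (Subtype.ext h)
          obtain ⟨i, hi⟩ := Function.ne_iff.mp hne
          have hlt : (b.1 i).val < (a.1 i).val :=
            lt_of_le_of_ne (hble i) (fun h => hi (z2_val_inj _ _ h))
          have h5 : wt b < wt a :=
            Finset.sum_lt_sum (fun i _ => hble i) ⟨i, Finset.mem_univ i, hlt⟩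
          omega
        rw [hrest, add_zero] at h0
        exact h0
    intro a
    exact key (wt a + 1) a (Nat.lt_succ_self _)
  refine ⟨hcard, hind, ?_⟩
  -- spanning
  intro f hmob
  set L : ((Fin n → ZMod 2) → ZMod 2) →ₗ[ZMod 2] ((Fin n → ZMod 2) → ZMod 2) :=
    muL n + LinearMap.id with hL
  have hLapp : ∀ h, L h = mobius h + h := fun h => rfl
  have hLcomp : ∀ h, L (L h) = 0 := by
    intro h
    rw [hLapp, hLapp]
    have hadd : mobius (mobius h + h) = mobius (mobius h) + mobius h := map_add (muL n) _ _
    rw [hadd, mobius_mobius]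
    funext x
    simp only [Pi.add_apply, Pi.zero_apply]
    have := z2_square (h x) (mobius h x)
    linear_combination this
  have hrange_le_ker : LinearMap.range L ≤ LinearMap.ker L := by
    rintro x ⟨y, rfl⟩
    exact LinearMap.mem_ker.2 (hLcomp y)
  set spanM := Submodule.span (ZMod 2) (Set.range hfam) with hspanM
  have hspan_le_range : spanM ≤ LinearMap.range L := by
    rw [hspanM, Submodule.span_le]
    rintro x ⟨a, rfl⟩
    refine ⟨monomial a.1, ?_⟩
    rw [hLapp, mobius_monomial]
    funext x
    simp [hhfam, add_comm]
  have hVrank : Module.finrank (ZMod 2) ((Fin n → ZMod 2) → ZMod 2) = 2 ^ n := by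
    rw [Module.finrank_pi, Fintype.card_fun, ZMod.card, Fintype.card_fin]
  have hspanrank : Module.finrank (ZMod 2) spanM = 2 ^ (n - 1) := by
    rw [hspanM, finrank_span_eq_card hind, hcard]
  have h6 := LinearMap.finrank_range_add_finrank_ker L
  rw [hVrank] at h6
  have h7 : Module.finrank (ZMod 2) (LinearMap.range L) ≤
      Module.finrank (ZMod 2) (LinearMap.ker L) := Submodule.finrank_mono hrange_le_ker
  have h8 : Module.finrank (ZMod 2) spanM ≤
      Module.finrank (ZMod 2) (LinearMap.range L) := Submodule.finrank_mono hspan_le_range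
  have h9 : 2 ^ n = 2 * 2 ^ (n - 1) := by
    rw [← pow_succ']
    congr 1
    omega
  rw [hspanrank] at h8
  have h10 : Module.finrank (ZMod 2) (LinearMap.range L) = 2 ^ (n - 1) := by omega
  have h11 : Module.finrank (ZMod 2) (LinearMap.ker L) = 2 ^ (n - 1) := by omega
  have hspan_eq : spanM = LinearMap.range L :=
    Submodule.eq_of_le_of_finrank_le hspan_le_range (by rw [h10, hspanrank])
  have hrange_eq : LinearMap.range L = LinearMap.ker L :=
    Submodule.eq_of_le_of_finrank_le hrange_le_ker (by rw [h10, h11])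
  have hf : f ∈ spanM := by
    rw [hspan_eq, hrange_eq]
    apply LinearMap.mem_ker.2
    rw [hLapp, hmob]
    funext x
    simp only [Pi.add_apply, Pi.zero_apply]
    exact z2_add_self (f x)
  rw [hspanM, Submodule.mem_span_range_iff_exists_fun] at hf
  obtain ⟨c, hc⟩ := hf
  refine ⟨Finset.univ.filter (fun a => c a = 1), ?_⟩
  rw [← hc, Finset.sum_filter]
  apply Finset.sum_congr rfl
  intro a _
  rcases z2_cases (c a) with h | h <;> simp [h, hhfam]
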